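/- Let T > 0, 0 < α < 1, k ≥ 1 an integer, and 0 < β ≤ 1 with β > α. Let u ∈ C^{0,β}([0,T]). There exists a constant C > 0 depending only on α, β, k and T (but not on τ or n) such that for every N ∈ ℕ with τ = T/N and every integer n with k ≤ n ≤ N, the L_k-type scheme satisfies |D_t^α u(t_n) − δ̂_τ^α u(t_n)| ≤ C [u]_{C^{0,β}[0,T]} τ^{β−α}. -/

import Mathlib

open Set MeasureTheory

/-- `M` is a Hölder bound (with exponent `β`) for `u` on `[0, T]`, i.e.
`[u]_{C^{0,β}[0,T]} ≤ M`; used with the least such `M`, it encodes the Hölder seminorm. -/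
def holderBnd (T β M : ℝ) (u : ℝ → ℝ) : Prop :=
  ∀ x ∈ Set.Icc (0:ℝ) T, ∀ y ∈ Set.Icc (0:ℝ) T, |u x - u y| ≤ M * |x - y| ^ β

/-- The degree-`k` Lagrange interpolant `Π_{k,j} u` of `u` at the `k+1` nodes
`t_{j-k}, …, t_j` (with `t_i = iτ`):
`Π_{k,j}u(s) = Σ_{l=0}^{k} u(t_{j-l}) Π_{i≠l} (s - t_{j-i})/(t_{j-l} - t_{j-i})`. -/
noncomputable def Pik (τ : ℝ) (u : ℝ → ℝ) (k j : ℕ) (s : ℝ) : ℝ :=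
  ∑ l ∈ Finset.range (k + 1), u (((j:ℝ) - (l:ℝ)) * τ) *
    ∏ i ∈ (Finset.range (k + 1)).erase l,
      (s - ((j:ℝ) - (i:ℝ)) * τ) / (((j:ℝ) - (l:ℝ)) * τ - ((j:ℝ) - (i:ℝ)) * τ)

/-- The Caputo fractional derivative of order `α` in integrated form:
`D_t^α u(t) = (1/Γ(1-α)) (u(t)-u(0))/t^α + (α/Γ(1-α)) ∫_0^t (u(t)-u(s))/(t-s)^{α+1} ds`. -/
noncomputable def caputo (α : ℝ) (u : ℝ → ℝ) (t : ℝ) : ℝ :=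
  (1 / Real.Gamma (1 - α)) * (u t - u 0) / t ^ α
    + (α / Real.Gamma (1 - α)) * ∫ s in (0:ℝ)..t, (u t - u s) / (t - s) ^ (α + 1)

/-- The piecewise interpolant `H^n u` of the `L_k`-type scheme: it equals `Π_{j,j} u` on
`(t_{j-1}, t_j)` for `1 ≤ j ≤ k-1` and `Π_{k,j} u` on `(t_{j-1}, t_j)` for `k ≤ j ≤ n`.
(For `s ∈ (t_{j-1}, t_j)` one has `⌈s/τ⌉ = j`.) -/
noncomputable def Lkinterp (τ : ℝ) (u : ℝ → ℝ) (k : ℕ) (s : ℝ) : ℝ :=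
  if ⌈s/τ⌉₊ < k then Pik τ u ⌈s/τ⌉₊ ⌈s/τ⌉₊ s else Pik τ u k ⌈s/τ⌉₊ s

/-- The `L_k`-type approximation `δ̂_τ^α u(t_n) = D_t^α (H^n u)(t_n)` of the Caputo
derivative. -/
noncomputable def Lkapprox (α τ : ℝ) (u : ℝ → ℝ) (k n : ℕ) : ℝ :=
  caputo α (Lkinterp τ u k) ((n:ℝ)*τ)


lemma lag_sum_one (τ : ℝ) (hτ : τ ≠ 0) (k : ℕ) (j s : ℝ) :
    ∑ l ∈ Finset.range (k+1), ∏ i ∈ (Finset.range (k+1)).erase l,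
      (s - (j - (i:ℝ))*τ) / ((j - (l:ℝ))*τ - (j - (i:ℝ))*τ) = 1 := by
  set v : ℕ → ℝ := fun i => (j - (i:ℝ)) * τ with hv
  have hinj : Set.InjOn v (Finset.range (k+1) : Set ℕ) := by
    intro a _ b _ hab
    have : ((a:ℝ)) = (b:ℝ) := by
      have := hab
      simp only [hv] at this
      have h2 : (j - (a:ℝ)) = (j - (b:ℝ)) := mul_right_cancel₀ hτ this
      linarith
    exact_mod_cast this
  have h := Lagrange.sum_basis hinj ⟨0, by simp⟩
  have h2 := congrArg (Polynomial.eval s) h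
  rw [Polynomial.eval_finset_sum, Polynomial.eval_one] at h2
  rw [← h2]
  refine Finset.sum_congr rfl fun l hl => ?_
  rw [Lagrange.basis, Polynomial.eval_prod]
  refine Finset.prod_congr rfl fun i hi => ?_
  simp only [Lagrange.basisDivisor, Polynomial.eval_mul, Polynomial.eval_C, Polynomial.eval_sub,
    Polynomial.eval_X]
  rw [div_eq_inv_mul]


lemma pik_node (τ : ℝ) (hτ : τ ≠ 0) (u : ℝ → ℝ) (k j : ℕ) :
    Pik τ u k j ((j:ℝ)*τ) = u ((j:ℝ)*τ) := by
  unfold Pik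
  rw [Finset.sum_eq_single 0]
  · have : ∏ i ∈ (Finset.range (k + 1)).erase 0,
        ((j:ℝ)*τ - ((j:ℝ) - (i:ℝ)) * τ) / (((j:ℝ) - ((0:ℕ):ℝ)) * τ - ((j:ℝ) - (i:ℝ)) * τ) = 1 := by
      refine Finset.prod_eq_one fun i hi => ?_
      have hi0 : i ≠ 0 := (Finset.mem_erase.mp hi).1
      have h1 : (j:ℝ)*τ - ((j:ℝ) - (i:ℝ)) * τ = (i:ℝ)*τ := by push_cast; ring
      have h2 : ((j:ℝ) - ((0:ℕ):ℝ)) * τ - ((j:ℝ) - (i:ℝ)) * τ = (i:ℝ)*τ := by push_cast; ring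
      rw [h1, h2, div_self]
      exact mul_ne_zero (Nat.cast_ne_zero.mpr hi0) hτ
    rw [this, mul_one]
    congr 1
    push_cast; ring
  · intro l hl hl0
    have h0mem : (0:ℕ) ∈ (Finset.range (k + 1)).erase l :=
      Finset.mem_erase.mpr ⟨(Ne.symm hl0), Finset.mem_range.mpr (Nat.succ_pos k)⟩
    rw [Finset.prod_eq_zero h0mem, mul_zero]
    have : (j:ℝ)*τ - ((j:ℝ) - ((0:ℕ):ℝ)) * τ = 0 := by push_cast; ring
    rw [this, zero_div]
  · intro h; exact absurd (Finset.mem_range.mpr (Nat.succ_pos k)) h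

lemma lk_zero (τ : ℝ) (u : ℝ → ℝ) (k : ℕ) (hk : 1 ≤ k) : Lkinterp τ u k 0 = u 0 := by
  unfold Lkinterp
  rw [zero_div]
  simp only [Nat.ceil_zero]
  rw [if_pos (by omega : 0 < k)]
  unfold Pik
  simp

lemma lk_node (τ : ℝ) (hτ : 0 < τ) (u : ℝ → ℝ) (k n : ℕ) (hkn : k ≤ n) :
    Lkinterp τ u k ((n:ℝ)*τ) = u ((n:ℝ)*τ) := by
  unfold Lkinterp
  have hc : ⌈(n:ℝ)*τ/τ⌉₊ = n := by
    rw [mul_div_assoc, div_self hτ.ne', mul_one, Nat.ceil_natCast]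
  rw [hc, if_neg (by omega)]
  exact pik_node τ hτ.ne' u k n


lemma num_bound (τ : ℝ) (hτ : 0 < τ) (kR : ℝ) (hk : 1 ≤ kR) (j iR : ℝ) (hi0 : 0 ≤ iR)
    (hik : iR ≤ kR) (s : ℝ) (hs1 : (j-1)*τ ≤ s) (hs2 : s ≤ j*τ) :
    |s - (j - iR)*τ| ≤ kR*τ := by
  rw [abs_le]; constructor <;> nlinarith

lemma factor_bound (τ : ℝ) (hτ : 0 < τ) (kR : ℝ) (hk : 1 ≤ kR) (j : ℝ) (i l : ℕ)
    (hik : (i:ℝ) ≤ kR) (hil : i ≠ l) (s : ℝ)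
    (hs1 : (j-1)*τ ≤ s) (hs2 : s ≤ j*τ) :
    |(s - (j - (i:ℝ))*τ) / ((j - (l:ℝ))*τ - (j - (i:ℝ))*τ)| ≤ kR := by
  have hnum : |s - (j - (i:ℝ))*τ| ≤ kR*τ :=
    num_bound τ hτ kR hk j i (by positivity) hik s hs1 hs2
  have hden : (j - (l:ℝ))*τ - (j - (i:ℝ))*τ = ((i:ℝ) - (l:ℝ))*τ := by ring
  have hz : (1:ℝ) ≤ |(i:ℝ) - (l:ℝ)| := by
    have h1 : (1:ℤ) ≤ |(i:ℤ) - (l:ℤ)| := by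
      rcases abs_cases ((i:ℤ) - (l:ℤ)) with ⟨h,_⟩|⟨h,_⟩ <;> omega
    exact_mod_cast h1
  have hdenb : τ ≤ |(j - (l:ℝ))*τ - (j - (i:ℝ))*τ| := by
    rw [hden, abs_mul, abs_of_pos hτ]; nlinarith [abs_nonneg ((i:ℝ) - (l:ℝ))]
  rw [abs_div]
  calc |s - (j - (i:ℝ))*τ| / |(j - (l:ℝ))*τ - (j - (i:ℝ))*τ| ≤ (kR*τ) / τ :=
        div_le_div₀ (by positivity) hnum hτ hdenb
    _ = kR := by field_simp

lemma prod_factor_bound (τ : ℝ) (hτ : 0 < τ) (k : ℕ) (hk : 1 ≤ k) (j : ℝ)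
    (t : Finset ℕ) (l : ℕ) (ht : t ⊆ (Finset.range (k+1)).erase l) (htc : t.card ≤ k) (s : ℝ)
    (hs1 : (j-1)*τ ≤ s) (hs2 : s ≤ j*τ) :
    |∏ i ∈ t, (s - (j - (i:ℝ))*τ) / ((j - (l:ℝ))*τ - (j - (i:ℝ))*τ)| ≤ (k:ℝ)^(k:ℕ) := by
  have hk1 : (1:ℝ) ≤ (k:ℝ) := by exact_mod_cast hk
  rw [Finset.abs_prod]
  calc ∏ i ∈ t, |(s - (j - (i:ℝ))*τ) / ((j - (l:ℝ))*τ - (j - (i:ℝ))*τ)|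
      ≤ ∏ _i ∈ t, (k:ℝ) := by
        refine Finset.prod_le_prod (fun i _ => abs_nonneg _) (fun i hi => ?_)
        have hmem := ht hi
        have hil : i ≠ l := (Finset.mem_erase.mp hmem).1
        have hik : (i:ℝ) ≤ (k:ℝ) := by
          have := Finset.mem_range.mp (Finset.mem_erase.mp hmem).2
          exact_mod_cast Nat.lt_succ_iff.mp this
        exact factor_bound τ hτ (k:ℝ) hk1 j i l hik hil s hs1 hs2
    _ = (k:ℝ)^t.card := Finset.prod_const _
    _ ≤ (k:ℝ)^(k:ℕ) := by
        apply pow_le_pow_right₀ hk1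
        exact htc

lemma pik_err (T β M : ℝ) (hβ0 : 0 < β) (u : ℝ → ℝ)
    (hu : holderBnd T β M u) (hM : 0 ≤ M) (τ : ℝ) (hτ : 0 < τ)
    (d j k : ℕ) (hd : 1 ≤ d) (hdk : d ≤ k) (hdj : d ≤ j)
    (hjT : (j:ℝ)*τ ≤ T) (s : ℝ) (hs1 : ((j:ℝ)-1)*τ ≤ s) (hs2 : s ≤ (j:ℝ)*τ) (hs0 : 0 ≤ s) :
    |Pik τ u d j s - u s| ≤ ((k:ℝ)+1) * (k:ℝ)^(k:ℕ) * ((k:ℝ)*τ)^β * M := by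
  have hk : 1 ≤ k := le_trans hd hdk
  have hk1 : (1:ℝ) ≤ (k:ℝ) := by exact_mod_cast hk
  have hsum := lag_sum_one τ hτ.ne' d (j:ℝ) s
  have key : Pik τ u d j s - u s = ∑ l ∈ Finset.range (d + 1),
      (u (((j:ℝ) - (l:ℝ)) * τ) - u s) *
        ∏ i ∈ (Finset.range (d + 1)).erase l,
          (s - ((j:ℝ) - (i:ℝ)) * τ) / (((j:ℝ) - (l:ℝ)) * τ - ((j:ℝ) - (i:ℝ)) * τ) := by
    symm
    calc ∑ l ∈ Finset.range (d + 1),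
        (u (((j:ℝ) - (l:ℝ)) * τ) - u s) *
          ∏ i ∈ (Finset.range (d + 1)).erase l,
            (s - ((j:ℝ) - (i:ℝ)) * τ) / (((j:ℝ) - (l:ℝ)) * τ - ((j:ℝ) - (i:ℝ)) * τ)
        = ∑ l ∈ Finset.range (d + 1),
          (u (((j:ℝ) - (l:ℝ)) * τ) *
            ∏ i ∈ (Finset.range (d + 1)).erase l,
              (s - ((j:ℝ) - (i:ℝ)) * τ) / (((j:ℝ) - (l:ℝ)) * τ - ((j:ℝ) - (i:ℝ)) * τ)
          - u s *
            ∏ i ∈ (Finset.range (d + 1)).erase l,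
              (s - ((j:ℝ) - (i:ℝ)) * τ) / (((j:ℝ) - (l:ℝ)) * τ - ((j:ℝ) - (i:ℝ)) * τ)) := by
          refine Finset.sum_congr rfl fun l _ => ?_; ring
      _ = (∑ l ∈ Finset.range (d + 1),
            u (((j:ℝ) - (l:ℝ)) * τ) *
              ∏ i ∈ (Finset.range (d + 1)).erase l,
                (s - ((j:ℝ) - (i:ℝ)) * τ) / (((j:ℝ) - (l:ℝ)) * τ - ((j:ℝ) - (i:ℝ)) * τ))
          - ∑ l ∈ Finset.range (d + 1), u s *
              ∏ i ∈ (Finset.range (d + 1)).erase l,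
                (s - ((j:ℝ) - (i:ℝ)) * τ) / (((j:ℝ) - (l:ℝ)) * τ - ((j:ℝ) - (i:ℝ)) * τ) :=
          Finset.sum_sub_distrib _ _
      _ = Pik τ u d j s - u s := by rw [← Finset.mul_sum, hsum, mul_one]; rfl
  rw [key]
  have hterm : ∀ l ∈ Finset.range (d + 1),
      |(u (((j:ℝ) - (l:ℝ)) * τ) - u s) *
        ∏ i ∈ (Finset.range (d + 1)).erase l,
          (s - ((j:ℝ) - (i:ℝ)) * τ) / (((j:ℝ) - (l:ℝ)) * τ - ((j:ℝ) - (i:ℝ)) * τ)|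
      ≤ (M * ((k:ℝ)*τ)^β) * (k:ℝ)^(k:ℕ) := by
    intro l hl
    have hld : l ≤ d := Nat.lt_succ_iff.mp (Finset.mem_range.mp hl)
    have hlj : (l:ℝ) ≤ (j:ℝ) := by exact_mod_cast le_trans hld hdj
    have hxl : ((j:ℝ) - (l:ℝ)) * τ ∈ Set.Icc (0:ℝ) T := by
      constructor
      · nlinarith
      · nlinarith
    have hsT : s ∈ Set.Icc (0:ℝ) T := ⟨hs0, le_trans hs2 hjT⟩
    rw [abs_mul]
    have h1 : |u (((j:ℝ) - (l:ℝ)) * τ) - u s| ≤ M * ((k:ℝ)*τ)^β := by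
      calc |u (((j:ℝ) - (l:ℝ)) * τ) - u s| ≤ M * |((j:ℝ) - (l:ℝ)) * τ - s| ^ β :=
            hu _ hxl _ hsT
        _ ≤ M * ((k:ℝ)*τ)^β := by
            apply mul_le_mul_of_nonneg_left _ hM
            apply Real.rpow_le_rpow (abs_nonneg _) _ hβ0.le
            rw [abs_sub_comm]
            exact num_bound τ hτ (k:ℝ) hk1 (j:ℝ) (l:ℝ) (by positivity)
              (by exact_mod_cast le_trans hld hdk) s hs1 hs2
    have h2 : |∏ i ∈ (Finset.range (d + 1)).erase l,
        (s - ((j:ℝ) - (i:ℝ)) * τ) / (((j:ℝ) - (l:ℝ)) * τ - ((j:ℝ) - (i:ℝ)) * τ)|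
        ≤ (k:ℝ)^(k:ℕ) := by
      apply prod_factor_bound τ hτ k hk (j:ℝ) _ l _ _ s hs1 hs2
      · intro i hi
        rcases Finset.mem_erase.mp hi with ⟨hil, hir⟩
        exact Finset.mem_erase.mpr ⟨hil, Finset.mem_range.mpr
          (lt_of_lt_of_le (Finset.mem_range.mp hir) (by omega))⟩
      · rw [Finset.card_erase_of_mem hl, Finset.card_range]
        omega
    exact mul_le_mul h1 h2 (abs_nonneg _) (by positivity)
  calc |∑ l ∈ Finset.range (d + 1), _| ≤ ∑ l ∈ Finset.range (d + 1),
        |(u (((j:ℝ) - (l:ℝ)) * τ) - u s) *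
          ∏ i ∈ (Finset.range (d + 1)).erase l,
            (s - ((j:ℝ) - (i:ℝ)) * τ) / (((j:ℝ) - (l:ℝ)) * τ - ((j:ℝ) - (i:ℝ)) * τ)| :=
        Finset.abs_sum_le_sum_abs _ _
    _ ≤ ∑ _l ∈ Finset.range (d + 1), (M * ((k:ℝ)*τ)^β) * (k:ℝ)^(k:ℕ) :=
        Finset.sum_le_sum hterm
    _ = ((d:ℝ)+1) * ((M * ((k:ℝ)*τ)^β) * (k:ℝ)^(k:ℕ)) := by
        rw [Finset.sum_const, Finset.card_range, nsmul_eq_mul]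
        push_cast; ring
    _ ≤ ((k:ℝ)+1) * (k:ℝ)^(k:ℕ) * ((k:ℝ)*τ)^β * M := by
        have hdk' : (d:ℝ) ≤ (k:ℝ) := by exact_mod_cast hdk
        have h1 : (0:ℝ) ≤ ((k:ℝ)*τ)^β := Real.rpow_nonneg (by positivity) β
        have h2 : (0:ℝ) ≤ (k:ℝ)^(k:ℕ) := by positivity
        nlinarith [mul_nonneg (mul_nonneg hM h1) h2]

lemma pik_err_last (T β M : ℝ) (hβ0 : 0 < β) (u : ℝ → ℝ)
    (hu : holderBnd T β M u) (hM : 0 ≤ M) (τ : ℝ) (hτ : 0 < τ)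
    (k n : ℕ) (hk : 1 ≤ k) (hkn : k ≤ n) (hnT : (n:ℝ)*τ ≤ T)
    (s : ℝ) (hs1 : ((n:ℝ)-1)*τ ≤ s) (hs2 : s ≤ (n:ℝ)*τ) (hs0 : 0 ≤ s) :
    |Pik τ u k n s - u s| ≤ M * ((n:ℝ)*τ - s)^β
      + ((k:ℝ)+1) * (k:ℝ)^(k:ℕ) * ((k:ℝ)*τ)^β * M * (((n:ℝ)*τ - s)/τ) := by
  have hk1 : (1:ℝ) ≤ (k:ℝ) := by exact_mod_cast hk
  have hkn' : (k:ℝ) ≤ (n:ℝ) := by exact_mod_cast hkn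
  have hsum := lag_sum_one τ hτ.ne' k (n:ℝ) s
  have hnIcc : (n:ℝ)*τ ∈ Set.Icc (0:ℝ) T := ⟨by positivity, hnT⟩
  have hsIcc : s ∈ Set.Icc (0:ℝ) T := ⟨hs0, le_trans hs2 hnT⟩
  set A := u ((n:ℝ)*τ) with hA
  have key : Pik τ u k n s - u s = (∑ l ∈ Finset.range (k + 1),
      (u (((n:ℝ) - (l:ℝ)) * τ) - A) *
        ∏ i ∈ (Finset.range (k + 1)).erase l,
          (s - ((n:ℝ) - (i:ℝ)) * τ) / (((n:ℝ) - (l:ℝ)) * τ - ((n:ℝ) - (i:ℝ)) * τ)) + (A - u s) := by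
    have h2 : ∑ l ∈ Finset.range (k + 1),
        (u (((n:ℝ) - (l:ℝ)) * τ) - A) *
          ∏ i ∈ (Finset.range (k + 1)).erase l,
            (s - ((n:ℝ) - (i:ℝ)) * τ) / (((n:ℝ) - (l:ℝ)) * τ - ((n:ℝ) - (i:ℝ)) * τ)
        = Pik τ u k n s - A := by
      calc ∑ l ∈ Finset.range (k + 1),
          (u (((n:ℝ) - (l:ℝ)) * τ) - A) *
            ∏ i ∈ (Finset.range (k + 1)).erase l,
              (s - ((n:ℝ) - (i:ℝ)) * τ) / (((n:ℝ) - (l:ℝ)) * τ - ((n:ℝ) - (i:ℝ)) * τ)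
          = ∑ l ∈ Finset.range (k + 1),
            (u (((n:ℝ) - (l:ℝ)) * τ) *
              ∏ i ∈ (Finset.range (k + 1)).erase l,
                (s - ((n:ℝ) - (i:ℝ)) * τ) / (((n:ℝ) - (l:ℝ)) * τ - ((n:ℝ) - (i:ℝ)) * τ)
            - A *
              ∏ i ∈ (Finset.range (k + 1)).erase l,
                (s - ((n:ℝ) - (i:ℝ)) * τ) / (((n:ℝ) - (l:ℝ)) * τ - ((n:ℝ) - (i:ℝ)) * τ)) := by
            refine Finset.sum_congr rfl fun l _ => ?_; ring
        _ = (∑ l ∈ Finset.range (k + 1),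
              u (((n:ℝ) - (l:ℝ)) * τ) *
                ∏ i ∈ (Finset.range (k + 1)).erase l,
                  (s - ((n:ℝ) - (i:ℝ)) * τ) / (((n:ℝ) - (l:ℝ)) * τ - ((n:ℝ) - (i:ℝ)) * τ))
            - ∑ l ∈ Finset.range (k + 1), A *
                ∏ i ∈ (Finset.range (k + 1)).erase l,
                  (s - ((n:ℝ) - (i:ℝ)) * τ) / (((n:ℝ) - (l:ℝ)) * τ - ((n:ℝ) - (i:ℝ)) * τ) :=
            Finset.sum_sub_distrib _ _
        _ = Pik τ u k n s - A := by rw [← Finset.mul_sum, hsum, mul_one]; rfl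
    rw [h2]; ring
  rw [key]
  have hB : (0:ℝ) ≤ ((k:ℝ)*τ)^β := Real.rpow_nonneg (by positivity) β
  have hKK : (0:ℝ) ≤ (k:ℝ)^(k:ℕ) := by positivity
  have hns : 0 ≤ (n:ℝ)*τ - s := by linarith
  have hterm : ∀ l ∈ Finset.range (k + 1),
      |(u (((n:ℝ) - (l:ℝ)) * τ) - A) *
        ∏ i ∈ (Finset.range (k + 1)).erase l,
          (s - ((n:ℝ) - (i:ℝ)) * τ) / (((n:ℝ) - (l:ℝ)) * τ - ((n:ℝ) - (i:ℝ)) * τ)|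
      ≤ (M * ((k:ℝ)*τ)^β) * ((k:ℝ)^(k:ℕ) * (((n:ℝ)*τ - s)/τ)) := by
    intro l hl
    have hlk : l ≤ k := Nat.lt_succ_iff.mp (Finset.mem_range.mp hl)
    rcases Nat.eq_zero_or_pos l with rfl | hl0
    · have : u (((n:ℝ) - ((0:ℕ):ℝ)) * τ) - A = 0 := by
        rw [hA]; norm_num
      rw [this, zero_mul, abs_zero]
      positivity
    · -- l ≥ 1
      have hlk' : (l:ℝ) ≤ (k:ℝ) := by exact_mod_cast hlk
      have hl1 : (1:ℝ) ≤ (l:ℝ) := by exact_mod_cast hl0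
      rw [abs_mul]
      have h1 : |u (((n:ℝ) - (l:ℝ)) * τ) - A| ≤ M * ((k:ℝ)*τ)^β := by
        have hxl : ((n:ℝ) - (l:ℝ)) * τ ∈ Set.Icc (0:ℝ) T := by
          constructor
          · nlinarith
          · nlinarith
        calc |u (((n:ℝ) - (l:ℝ)) * τ) - A| ≤ M * |((n:ℝ) - (l:ℝ)) * τ - (n:ℝ)*τ| ^ β :=
              hu _ hxl _ hnIcc
          _ ≤ M * ((k:ℝ)*τ)^β := by
              apply mul_le_mul_of_nonneg_left _ hM
              apply Real.rpow_le_rpow (abs_nonneg _) _ hβ0.le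
              rw [show ((n:ℝ) - (l:ℝ)) * τ - (n:ℝ)*τ = -((l:ℝ)*τ) by ring, abs_neg,
                abs_of_nonneg (by positivity)]
              nlinarith
      have h0mem : (0:ℕ) ∈ (Finset.range (k + 1)).erase l :=
        Finset.mem_erase.mpr ⟨by omega, Finset.mem_range.mpr (Nat.succ_pos k)⟩
      have hsplit : ∏ i ∈ (Finset.range (k + 1)).erase l,
          (s - ((n:ℝ) - (i:ℝ)) * τ) / (((n:ℝ) - (l:ℝ)) * τ - ((n:ℝ) - (i:ℝ)) * τ)
          = ((s - ((n:ℝ) - ((0:ℕ):ℝ)) * τ) / (((n:ℝ) - (l:ℝ)) * τ - ((n:ℝ) - ((0:ℕ):ℝ)) * τ)) *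
            ∏ i ∈ ((Finset.range (k + 1)).erase l).erase 0,
              (s - ((n:ℝ) - (i:ℝ)) * τ) / (((n:ℝ) - (l:ℝ)) * τ - ((n:ℝ) - (i:ℝ)) * τ) :=
        (Finset.mul_prod_erase _ _ h0mem).symm
      rw [hsplit, abs_mul]
      have hf0 : |(s - ((n:ℝ) - ((0:ℕ):ℝ)) * τ) / (((n:ℝ) - (l:ℝ)) * τ - ((n:ℝ) - ((0:ℕ):ℝ)) * τ)|
          ≤ ((n:ℝ)*τ - s)/τ := by
        rw [abs_div]
        have hnum : |s - ((n:ℝ) - ((0:ℕ):ℝ)) * τ| = (n:ℝ)*τ - s := by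
          rw [show s - ((n:ℝ) - ((0:ℕ):ℝ)) * τ = -((n:ℝ)*τ - s) by push_cast; ring, abs_neg,
            abs_of_nonneg hns]
        have hden : τ ≤ |((n:ℝ) - (l:ℝ)) * τ - ((n:ℝ) - ((0:ℕ):ℝ)) * τ| := by
          rw [show ((n:ℝ) - (l:ℝ)) * τ - ((n:ℝ) - ((0:ℕ):ℝ)) * τ = -((l:ℝ)*τ) by push_cast; ring,
            abs_neg, abs_of_nonneg (by positivity)]
          nlinarith
        rw [hnum]
        exact div_le_div₀ hns le_rfl hτ hden
      have hprod : |∏ i ∈ ((Finset.range (k + 1)).erase l).erase 0,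
          (s - ((n:ℝ) - (i:ℝ)) * τ) / (((n:ℝ) - (l:ℝ)) * τ - ((n:ℝ) - (i:ℝ)) * τ)|
          ≤ (k:ℝ)^(k:ℕ) := by
        apply prod_factor_bound τ hτ k hk (n:ℝ) _ l (Finset.erase_subset _ _) _ s hs1 hs2
        calc (((Finset.range (k + 1)).erase l).erase 0).card
            ≤ ((Finset.range (k + 1)).erase l).card := Finset.card_erase_le
          _ = k := by rw [Finset.card_erase_of_mem hl, Finset.card_range]; omega
      calc |u (((n:ℝ) - (l:ℝ)) * τ) - A| *
          (|(s - ((n:ℝ) - ((0:ℕ):ℝ)) * τ) / (((n:ℝ) - (l:ℝ)) * τ - ((n:ℝ) - ((0:ℕ):ℝ)) * τ)| *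
            |∏ i ∈ ((Finset.range (k + 1)).erase l).erase 0,
              (s - ((n:ℝ) - (i:ℝ)) * τ) / (((n:ℝ) - (l:ℝ)) * τ - ((n:ℝ) - (i:ℝ)) * τ)|)
          ≤ (M * ((k:ℝ)*τ)^β) * ((((n:ℝ)*τ - s)/τ) * (k:ℝ)^(k:ℕ)) := by
            apply mul_le_mul h1 _ (by positivity) (by positivity)
            exact mul_le_mul hf0 hprod (abs_nonneg _) (by positivity)
        _ = (M * ((k:ℝ)*τ)^β) * ((k:ℝ)^(k:ℕ) * (((n:ℝ)*τ - s)/τ)) := by ring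
  have hsumb : |∑ l ∈ Finset.range (k + 1),
      (u (((n:ℝ) - (l:ℝ)) * τ) - A) *
        ∏ i ∈ (Finset.range (k + 1)).erase l,
          (s - ((n:ℝ) - (i:ℝ)) * τ) / (((n:ℝ) - (l:ℝ)) * τ - ((n:ℝ) - (i:ℝ)) * τ)|
      ≤ ((k:ℝ)+1) * (k:ℝ)^(k:ℕ) * ((k:ℝ)*τ)^β * M * (((n:ℝ)*τ - s)/τ) := by
    calc |∑ l ∈ Finset.range (k + 1), _| ≤ ∑ l ∈ Finset.range (k + 1),
          |(u (((n:ℝ) - (l:ℝ)) * τ) - A) *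
            ∏ i ∈ (Finset.range (k + 1)).erase l,
              (s - ((n:ℝ) - (i:ℝ)) * τ) / (((n:ℝ) - (l:ℝ)) * τ - ((n:ℝ) - (i:ℝ)) * τ)| :=
          Finset.abs_sum_le_sum_abs _ _
      _ ≤ ∑ _l ∈ Finset.range (k + 1), (M * ((k:ℝ)*τ)^β) * ((k:ℝ)^(k:ℕ) * (((n:ℝ)*τ - s)/τ)) :=
          Finset.sum_le_sum hterm
      _ = ((k:ℝ)+1) * ((M * ((k:ℝ)*τ)^β) * ((k:ℝ)^(k:ℕ) * (((n:ℝ)*τ - s)/τ))) := by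
          rw [Finset.sum_const, Finset.card_range, nsmul_eq_mul]
          push_cast; ring
      _ = ((k:ℝ)+1) * (k:ℝ)^(k:ℕ) * ((k:ℝ)*τ)^β * M * (((n:ℝ)*τ - s)/τ) := by ring
  have hAs : |A - u s| ≤ M * ((n:ℝ)*τ - s)^β := by
    calc |A - u s| ≤ M * |(n:ℝ)*τ - s| ^ β := hu _ hnIcc _ hsIcc
      _ = M * ((n:ℝ)*τ - s)^β := by rw [abs_of_nonneg hns]
  calc |(∑ l ∈ Finset.range (k + 1),
      (u (((n:ℝ) - (l:ℝ)) * τ) - A) *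
        ∏ i ∈ (Finset.range (k + 1)).erase l,
          (s - ((n:ℝ) - (i:ℝ)) * τ) / (((n:ℝ) - (l:ℝ)) * τ - ((n:ℝ) - (i:ℝ)) * τ)) + (A - u s)|
      ≤ |∑ l ∈ Finset.range (k + 1),
          (u (((n:ℝ) - (l:ℝ)) * τ) - A) *
            ∏ i ∈ (Finset.range (k + 1)).erase l,
              (s - ((n:ℝ) - (i:ℝ)) * τ) / (((n:ℝ) - (l:ℝ)) * τ - ((n:ℝ) - (i:ℝ)) * τ)|
        + |A - u s| := abs_add_le _ _
    _ ≤ ((k:ℝ)+1) * (k:ℝ)^(k:ℕ) * ((k:ℝ)*τ)^β * M * (((n:ℝ)*τ - s)/τ)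
        + M * ((n:ℝ)*τ - s)^β := add_le_add hsumb hAs
    _ = M * ((n:ℝ)*τ - s)^β
        + ((k:ℝ)+1) * (k:ℝ)^(k:ℕ) * ((k:ℝ)*τ)^β * M * (((n:ℝ)*τ - s)/τ) := by ring


lemma lk_err (T β M : ℝ) (hβ0 : 0 < β) (u : ℝ → ℝ) (hu : holderBnd T β M u) (hM : 0 ≤ M)
    (τ : ℝ) (hτ : 0 < τ) (k n N : ℕ) (hk : 1 ≤ k) (hkn : k ≤ n) (hnN : n ≤ N)
    (hNT : (N:ℝ)*τ ≤ T) (s : ℝ) (hs : s ∈ Set.Ioc 0 ((n:ℝ)*τ)) :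
    |Lkinterp τ u k s - u s| ≤ ((k:ℝ)+1) * (k:ℝ)^(k:ℕ) * ((k:ℝ)*τ)^β * M := by
  obtain ⟨hs0, hsn⟩ := hs
  unfold Lkinterp
  set j := ⌈s/τ⌉₊ with hj
  have hj1 : 1 ≤ j := Nat.ceil_pos.mpr (div_pos hs0 hτ)
  have hjn : j ≤ n := Nat.ceil_le.mpr ((div_le_iff₀ hτ).mpr (by linarith))
  have hsu : s ≤ (j:ℝ)*τ := (div_le_iff₀ hτ).mp (Nat.le_ceil _)
  have hsl : ((j:ℝ)-1)*τ ≤ s := by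
    have h1 : j - 1 < j := by omega
    have h2 : ((j-1:ℕ):ℝ) < s/τ := Nat.lt_ceil.mp h1
    have h3 : ((j-1:ℕ):ℝ) = (j:ℝ) - 1 := by
      rw [Nat.cast_sub hj1]; norm_num
    rw [h3] at h2
    nlinarith [(lt_div_iff₀ hτ).mp h2]
  have hjT : (j:ℝ)*τ ≤ T := by
    have : (j:ℝ) ≤ (N:ℝ) := by exact_mod_cast le_trans hjn hnN
    nlinarith
  split_ifs with h
  · exact pik_err T β M hβ0 u hu hM τ hτ j j k hj1 (le_of_lt h) le_rfl hjT s hsl hsu hs0.le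
  · exact pik_err T β M hβ0 u hu hM τ hτ k j k hk le_rfl (le_of_not_gt h) hjT s hsl hsu hs0.le

lemma lk_err_last (T β M : ℝ) (hβ0 : 0 < β) (u : ℝ → ℝ) (hu : holderBnd T β M u) (hM : 0 ≤ M)
    (τ : ℝ) (hτ : 0 < τ) (k n : ℕ) (hk : 1 ≤ k) (hkn : k ≤ n) (hnT : (n:ℝ)*τ ≤ T)
    (s : ℝ) (hs1 : ((n:ℝ)-1)*τ < s) (hs2 : s ≤ (n:ℝ)*τ) :
    |Lkinterp τ u k s - u s| ≤ M * ((n:ℝ)*τ - s)^β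
      + ((k:ℝ)+1) * (k:ℝ)^(k:ℕ) * ((k:ℝ)*τ)^β * M * (((n:ℝ)*τ - s)/τ) := by
  have hn1 : 1 ≤ n := le_trans hk hkn
  have hn1' : (1:ℝ) ≤ (n:ℝ) := by exact_mod_cast hn1
  have hs0 : 0 ≤ s := by nlinarith
  have hceil : ⌈s/τ⌉₊ = n := by
    rw [Nat.ceil_eq_iff (by omega)]
    constructor
    · rw [show ((n-1:ℕ):ℝ) = (n:ℝ) - 1 by rw [Nat.cast_sub hn1]; norm_num]
      rw [lt_div_iff₀ hτ]
      nlinarith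
    · rw [div_le_iff₀ hτ]
      nlinarith
  unfold Lkinterp
  rw [hceil, if_neg (by omega)]
  exact pik_err_last T β M hβ0 u hu hM τ hτ k n hk hkn hnT s hs1.le hs2 hs0


lemma pik_cont (τ : ℝ) (u : ℝ → ℝ) (k j : ℕ) : Continuous (fun s => Pik τ u k j s) := by
  unfold Pik
  refine continuous_finset_sum _ fun l _ => Continuous.mul continuous_const ?_
  exact continuous_finset_prod _ fun i _ => (continuous_id.sub continuous_const).div_const _

lemma lk_meas (τ : ℝ) (u : ℝ → ℝ) (k : ℕ) : Measurable (Lkinterp τ u k) := by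
  have hF : Measurable (fun p : ℝ × ℕ =>
      if p.2 < k then Pik τ u p.2 p.2 p.1 else Pik τ u k p.2 p.1) := by
    apply measurable_from_prod_countable_left
    intro j
    simp only []
    by_cases h : j < k <;> simp only [if_pos, h, if_true, if_false]
    · exact (pik_cont τ u j j).measurable
    · exact (pik_cont τ u k j).measurable
  have hpair : Measurable (fun s : ℝ => (s, ⌈s/τ⌉₊)) :=
    measurable_id.prodMk (Nat.measurable_ceil.comp (measurable_id.div_const τ))
  exact hF.comp hpair


lemma abs_integral_rpow_first (α t aa τ : ℝ) (hα : 0 < α) (hτ : 0 < τ) (hta : t - aa = τ)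
    (h0a : 0 ≤ aa) :
    |∫ s in (0:ℝ)..aa, (t-s)^(-(α+1))| ≤ τ^(-α)/α := by
  have hat : aa ≤ t := by linarith
  have ht0 : 0 < t := by linarith
  rw [intervalIntegral.integral_comp_sub_left (fun x => x^(-(α+1))) t]
  rw [sub_zero, hta]
  have h0 : (0:ℝ) ∉ Set.uIcc τ t := Set.notMem_uIcc_of_lt hτ ht0
  rw [integral_rpow (Or.inr ⟨by intro h; have h' : -(α+1) = -1 := h; linarith, h0⟩)]
  have he : -(α+1)+1 = -α := by ring
  rw [he]
  have h1 : t^(-α) ≤ τ^(-α) := Real.rpow_le_rpow_of_nonpos hτ (by linarith) (by linarith)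
  have h2 : 0 < t^(-α) := Real.rpow_pos_of_pos ht0 _
  have h3 : 0 < τ^(-α) := Real.rpow_pos_of_pos hτ _
  rw [abs_div, abs_of_nonpos (by linarith : t^(-α) - τ^(-α) ≤ 0), abs_of_neg (by linarith : -α < 0)]
  rw [neg_sub, neg_neg]
  exact (div_le_div_iff_of_pos_right hα).mpr (by linarith)

lemma integral_rpow_last (r τ t aa : ℝ) (hr : -1 < r) (hτ : 0 < τ) (hta : t - aa = τ) :
    ∫ s in aa..t, (t-s)^r = τ^(r+1)/(r+1) := by
  rw [intervalIntegral.integral_comp_sub_left (fun x => x^r) t]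
  rw [sub_self, hta, integral_rpow (Or.inl hr), Real.zero_rpow (by linarith : r+1 ≠ 0), sub_zero]

set_option maxHeartbeats 2000000 in
theorem stmt14 (T : ℝ) (hT : 0 < T) (α : ℝ) (hα0 : 0 < α) (hα1 : α < 1)
    (k : ℕ) (hk : 1 ≤ k) (β : ℝ) (hαβ : α < β) (hβ1 : β ≤ 1) :
    ∃ C > 0, ∀ u : ℝ → ℝ, ContinuousOn u (Set.Icc 0 T) →
      ∀ M : ℝ, 0 ≤ M → holderBnd T β M u →
        ∀ N : ℕ, 0 < N → ∀ τ : ℝ, τ = T / N →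
          ∀ n : ℕ, k ≤ n → n ≤ N →
            |caputo α u ((n:ℝ)*τ) - Lkapprox α τ u k n| ≤ C * M * τ ^ (β - α) := by
  have hβ0 : 0 < β := lt_trans hα0 hαβ
  have hβα : 0 < β - α := by linarith
  have h1α : 0 < 1 - α := by linarith
  have hΓ : 0 < Real.Gamma (1 - α) := Real.Gamma_pos_of_pos h1α
  have hK1 : (1:ℝ) ≤ (k:ℝ) := by exact_mod_cast hk
  have hK0 : (0:ℝ) < (k:ℝ) := by linarith
  set Ek : ℝ := ((k:ℝ)+1) * (k:ℝ)^(k:ℕ) with hEk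
  have hEk0 : 0 < Ek := by positivity
  set C1 : ℝ := Ek * (k:ℝ)^β with hC1
  have hC10 : 0 < C1 := by positivity
  have hCpos : 0 < C1/Real.Gamma (1-α) + α/((β-α)*Real.Gamma (1-α))
      + C1*α/((1-α)*Real.Gamma (1-α)) :=
    add_pos (add_pos (div_pos hC10 hΓ) (div_pos hα0 (mul_pos hβα hΓ)))
      (div_pos (mul_pos hC10 hα0) (mul_pos h1α hΓ))
  refine ⟨C1/Real.Gamma (1-α) + α/((β-α)*Real.Gamma (1-α)) + C1*α/((1-α)*Real.Gamma (1-α)),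
    hCpos, ?_⟩
  intro u hu M hM hub N hN τ hτdef n hkn hnN
  have hN0 : (0:ℝ) < (N:ℝ) := by exact_mod_cast hN
  have hτ0 : 0 < τ := by rw [hτdef]; positivity
  have hNT : (N:ℝ)*τ = T := by rw [hτdef]; field_simp
  have hn1 : 1 ≤ n := le_trans hk hkn
  have hn1' : (1:ℝ) ≤ (n:ℝ) := by exact_mod_cast hn1
  have hnN' : (n:ℝ) ≤ (N:ℝ) := by exact_mod_cast hnN
  set t := (n:ℝ)*τ with htdef
  have ht0 : 0 < t := by nlinarith
  have htT : t ≤ T := by nlinarith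
  set aa := ((n:ℝ)-1)*τ with haa
  have hta : t - aa = τ := by rw [htdef, haa]; ring
  have ha0 : 0 ≤ aa := by rw [haa]; nlinarith
  have hat : aa ≤ t := by linarith
  set H := Lkinterp τ u k with hHdef
  have hHt : H t = u t := lk_node τ hτ0 u k n hkn
  have hH0 : H 0 = u 0 := lk_zero τ u k hk
  set B : ℝ := Ek * ((k:ℝ)*τ)^β * M with hB
  have hkτβ : (0:ℝ) < ((k:ℝ)*τ)^β := Real.rpow_pos_of_pos (by positivity) _
  have hB0 : 0 ≤ B := by positivity
  -- measurability
  have hmeasH : Measurable H := lk_meas τ u k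
  have hmeasden : Measurable (fun s : ℝ => (t - s)^(α+1)) :=
    ((Real.continuous_rpow_const (by linarith : (0:ℝ) ≤ α+1)).comp
      (continuous_const.sub continuous_id)).measurable
  have hsub1 : Set.Ioc (0:ℝ) t ⊆ Set.Icc (0:ℝ) T := fun x hx => ⟨hx.1.le, hx.2.trans htT⟩
  have hmu : AEMeasurable u (volume.restrict (Set.Ioc (0:ℝ) t)) :=
    (hu.mono hsub1).aemeasurable measurableSet_Ioc
  have hgmeas : ∀ c d : ℝ, Set.Ioc c d ⊆ Set.Ioc 0 t →
      AEStronglyMeasurable (fun s => (H s - u s)/(t-s)^(α+1))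
        (volume.restrict (Set.Ioc c d)) := by
    intro c d hcd
    have h1 : AEMeasurable u (volume.restrict (Set.Ioc c d)) :=
      hmu.mono_measure (Measure.restrict_mono hcd le_rfl)
    exact ((hmeasH.aemeasurable.sub h1).div hmeasden.aemeasurable).aestronglyMeasurable
  have hf1meas : AEStronglyMeasurable (fun s => (u t - u s)/(t-s)^(α+1))
      (volume.restrict (Set.Ioc (0:ℝ) t)) :=
    ((aemeasurable_const.sub hmu).div hmeasden.aemeasurable).aestronglyMeasurable
  -- pointwise bounds
  have hDpos : ∀ s : ℝ, s < t → (0:ℝ) < (t-s)^(α+1) :=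
    fun s hs => Real.rpow_pos_of_pos (by linarith) _
  have hbound1 : ∀ s ∈ Set.Ioc (0:ℝ) aa,
      ‖(H s - u s)/(t-s)^(α+1)‖ ≤ B * (t-s)^(-(α+1)) := by
    intro s hs
    have hst : s < t := lt_of_le_of_lt hs.2 (by linarith)
    have hD := hDpos s hst
    have hnum : |H s - u s| ≤ B :=
      lk_err T β M hβ0 u hub hM τ hτ0 k n N hk hkn hnN (le_of_eq hNT) s ⟨hs.1, by linarith⟩
    rw [Real.norm_eq_abs, abs_div, abs_of_pos hD, Real.rpow_neg (by linarith : (0:ℝ) ≤ t - s),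
      div_eq_mul_inv]
    exact mul_le_mul_of_nonneg_right hnum (by positivity)
  have hbound2 : ∀ s ∈ Set.Ioc aa t,
      ‖(H s - u s)/(t-s)^(α+1)‖ ≤ M*(t-s)^(β-α-1) + (B/τ)*(t-s)^(-α) := by
    intro s hs
    rcases eq_or_lt_of_le hs.2 with heq | hst
    · rw [heq, hHt]
      simp only [sub_self, zero_div, norm_zero]
      have h1 : (0:ℝ) ≤ (0:ℝ)^(β-α-1) := Real.rpow_nonneg le_rfl _
      have h2 : (0:ℝ) ≤ (0:ℝ)^(-α) := Real.rpow_nonneg le_rfl _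
      have h3 : (0:ℝ) ≤ B/τ := by positivity
      exact add_nonneg (mul_nonneg hM h1) (mul_nonneg h3 h2)
    · have hD := hDpos s hst
      have hts0 : (0:ℝ) < t - s := by linarith
      have hnum : |H s - u s| ≤ M * (t - s)^β + B * ((t-s)/τ) := by
        have := lk_err_last T β M hβ0 u hub hM τ hτ0 k n hk hkn htT s (by rw [← haa]; exact hs.1)
          (by rw [← htdef]; exact hst.le)
        rw [← htdef] at this
        exact this
      rw [Real.norm_eq_abs, abs_div, abs_of_pos hD, div_le_iff₀ hD]
      calc |H s - u s| ≤ M * (t - s)^β + B * ((t-s)/τ) := hnum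
        _ = (M*(t-s)^(β-α-1) + (B/τ)*(t-s)^(-α)) * (t-s)^(α+1) := by
            rw [add_mul]
            congr 1
            · rw [mul_assoc, ← Real.rpow_add hts0]
              norm_num
            · rw [mul_assoc (B/τ), ← Real.rpow_add hts0, show -α + (α+1) = 1 by ring,
                Real.rpow_one]
              ring
  have hboundf1 : ∀ s ∈ Set.Ioc (0:ℝ) t,
      ‖(u t - u s)/(t-s)^(α+1)‖ ≤ M*(t-s)^(β-α-1) := by
    intro s hs
    rcases eq_or_lt_of_le hs.2 with heq | hst
    · rw [heq]
      simp only [sub_self, zero_div, norm_zero]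
      exact mul_nonneg hM (Real.rpow_nonneg le_rfl _)
    · have hD := hDpos s hst
      have hts0 : (0:ℝ) < t - s := by linarith
      have hnum : |u t - u s| ≤ M * (t - s)^β := by
        have := hub t ⟨ht0.le, htT⟩ s ⟨hs.1.le, hs.2.trans htT⟩
        rwa [abs_of_pos hts0] at this
      rw [Real.norm_eq_abs, abs_div, abs_of_pos hD, div_le_iff₀ hD]
      calc |u t - u s| ≤ M * (t - s)^β := hnum
        _ = M*(t-s)^(β-α-1) * (t-s)^(α+1) := by
            rw [mul_assoc, ← Real.rpow_add hts0]
            norm_num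
  -- integrable dominating functions
  have hIb1 : IntervalIntegrable (fun s => M*(t - s)^(β-α-1)) volume 0 t := by
    have h := (intervalIntegral.intervalIntegrable_rpow' (by linarith : (-1:ℝ) < β-α-1)
      (a := t) (b := 0)).comp_sub_left t
    simp only [sub_self, sub_zero] at h
    exact h.const_mul M
  have hIb2 : IntervalIntegrable (fun s => (B/τ)*(t - s)^(-α)) volume aa t := by
    have h := (intervalIntegral.intervalIntegrable_rpow' (by linarith : (-1:ℝ) < -α)
      (a := τ) (b := 0)).comp_sub_left t
    simp only [sub_zero] at h
    rw [show t - τ = aa by linarith] at h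
    exact h.const_mul _
  have hIb0 : IntervalIntegrable (fun s => B*(t - s)^(-(α+1))) volume 0 aa := by
    have h0 : (0:ℝ) ∉ Set.uIcc t τ := Set.notMem_uIcc_of_lt ht0 hτ0
    have h := (intervalIntegral.intervalIntegrable_rpow (r := -(α+1))
      (Or.inr h0)).comp_sub_left t
    simp only [sub_self] at h
    rw [show t - τ = aa by linarith] at h
    exact h.const_mul B
  -- interval integrability of the error integrand
  have hIg1 : IntervalIntegrable (fun s => (H s - u s)/(t-s)^(α+1)) volume 0 aa := by
    apply hIb0.mono_fun'
    · rw [Set.uIoc_of_le ha0]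
      exact hgmeas 0 aa (Set.Ioc_subset_Ioc le_rfl hat)
    · rw [Set.uIoc_of_le ha0, Filter.EventuallyLE,
        ae_restrict_iff' measurableSet_Ioc]
      exact Filter.Eventually.of_forall hbound1
  have hIg2 : IntervalIntegrable (fun s => (H s - u s)/(t-s)^(α+1)) volume aa t := by
    apply IntervalIntegrable.mono_fun' ((hIb1.mono_set ?sub).add hIb2)
    · rw [Set.uIoc_of_le hat]
      exact hgmeas aa t (Set.Ioc_subset_Ioc ha0 le_rfl)
    · rw [Set.uIoc_of_le hat, Filter.EventuallyLE,
        ae_restrict_iff' measurableSet_Ioc]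
      exact Filter.Eventually.of_forall hbound2
    case sub => rw [Set.uIcc_of_le hat, Set.uIcc_of_le ht0.le]; exact Set.Icc_subset_Icc ha0 le_rfl
  have hIg : IntervalIntegrable (fun s => (H s - u s)/(t-s)^(α+1)) volume 0 t :=
    hIg1.trans hIg2
  have hIf1 : IntervalIntegrable (fun s => (u t - u s)/(t-s)^(α+1)) volume 0 t := by
    apply hIb1.mono_fun'
    · rw [Set.uIoc_of_le ht0.le]; exact hf1meas
    · rw [Set.uIoc_of_le ht0.le, Filter.EventuallyLE, ae_restrict_iff' measurableSet_Ioc]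
      exact Filter.Eventually.of_forall hboundf1
  have hIf2 : IntervalIntegrable (fun s => (u t - H s)/(t-s)^(α+1)) volume 0 t := by
    have heq : (fun s => (u t - H s)/(t-s)^(α+1))
        = fun s => (u t - u s)/(t-s)^(α+1) - (H s - u s)/(t-s)^(α+1) := by
      funext s
      show (u t - H s)/(t-s)^(α+1) = (u t - u s)/(t-s)^(α+1) - (H s - u s)/(t-s)^(α+1)
      rw [div_sub_div_same]
      congr 1
      ring
    rw [heq]
    exact hIf1.sub hIg
  -- the difference equals (α/Γ) ∫ g
  have hdiff : caputo α u t - Lkapprox α τ u k n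
      = (α / Real.Gamma (1-α)) * ∫ s in (0:ℝ)..t, (H s - u s)/(t-s)^(α+1) := by
    have hL : Lkapprox α τ u k n = caputo α H t := rfl
    rw [hL]
    unfold caputo
    rw [hHt, hH0]
    have hEq : (∫ s in (0:ℝ)..t, (u t - u s)/(t-s)^(α+1))
        - ∫ s in (0:ℝ)..t, (u t - H s)/(t-s)^(α+1)
        = ∫ s in (0:ℝ)..t, (H s - u s)/(t-s)^(α+1) := by
      rw [← intervalIntegral.integral_sub hIf1 hIf2]
      apply intervalIntegral.integral_congr
      intro s _
      show (u t - u s)/(t-s)^(α+1) - (u t - H s)/(t-s)^(α+1) = (H s - u s)/(t-s)^(α+1)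
      rw [div_sub_div_same]
      congr 1
      ring
    rw [← hEq]
    ring
  -- split and bound the integral
  have hsplitI : ∫ s in (0:ℝ)..t, (H s - u s)/(t-s)^(α+1)
      = (∫ s in (0:ℝ)..aa, (H s - u s)/(t-s)^(α+1))
        + ∫ s in aa..t, (H s - u s)/(t-s)^(α+1) :=
    (intervalIntegral.integral_add_adjacent_intervals hIg1 hIg2).symm
  have hI1 : |∫ s in (0:ℝ)..aa, (H s - u s)/(t-s)^(α+1)| ≤ B * (τ^(-α)/α) := by
    have h1 := intervalIntegral.norm_integral_le_abs_of_norm_le (μ := volume) (f := fun s =>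
      (H s - u s)/(t-s)^(α+1)) (g := fun s => B*(t - s)^(-(α+1))) (a := 0) (b := aa)
      (by rw [Set.uIoc_of_le ha0, ae_restrict_iff' measurableSet_Ioc]
          exact Filter.Eventually.of_forall hbound1) hIb0
    rw [Real.norm_eq_abs] at h1
    refine h1.trans ?_
    rw [intervalIntegral.integral_const_mul, abs_mul, abs_of_nonneg hB0]
    exact mul_le_mul_of_nonneg_left
      (abs_integral_rpow_first α t aa τ hα0 hτ0 hta ha0) hB0
  have hI2 : |∫ s in aa..t, (H s - u s)/(t-s)^(α+1)|
      ≤ M*(τ^(β-α)/(β-α)) + (B/τ)*(τ^(1-α)/(1-α)) := by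
    have h1 := intervalIntegral.norm_integral_le_abs_of_norm_le (μ := volume) (f := fun s =>
      (H s - u s)/(t-s)^(α+1))
      (g := fun s => M*(t-s)^(β-α-1) + (B/τ)*(t-s)^(-α)) (a := aa) (b := t)
      (by rw [Set.uIoc_of_le hat, ae_restrict_iff' measurableSet_Ioc]
          exact Filter.Eventually.of_forall hbound2) ((hIb1.mono_set (by
            rw [Set.uIcc_of_le hat, Set.uIcc_of_le ht0.le]
            exact Set.Icc_subset_Icc ha0 le_rfl)).add hIb2)
    rw [Real.norm_eq_abs] at h1
    refine h1.trans (le_of_eq ?_)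
    rw [intervalIntegral.integral_add (hIb1.mono_set (by
        rw [Set.uIcc_of_le hat, Set.uIcc_of_le ht0.le]
        exact Set.Icc_subset_Icc ha0 le_rfl)) hIb2,
      intervalIntegral.integral_const_mul, intervalIntegral.integral_const_mul,
      integral_rpow_last (β-α-1) τ t aa (by linarith) hτ0 hta,
      integral_rpow_last (-α) τ t aa (by linarith) hτ0 hta,
      show β-α-1+1 = β-α by ring, show -α+1 = 1-α by ring]
    rw [abs_of_nonneg]
    positivity
  -- final algebra
  have hBval : B = C1 * M * τ^β := by
    rw [hB, hC1, Real.mul_rpow hK0.le hτ0.le]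
    ring
  have e1 : τ^β * τ^(-α) = τ^(β-α) := by
    rw [← Real.rpow_add hτ0]
    ring_nf
  have e2 : τ^β * τ^(1-α) = τ^(β-α) * τ := by
    rw [← Real.rpow_add hτ0, show β + (1-α) = (β-α)+1 by ring, Real.rpow_add hτ0, Real.rpow_one]
  have hS1 : B * (τ^(-α)/α) = C1*M*τ^(β-α)/α := by
    rw [hBval]
    calc C1*M*τ^β * (τ^(-α)/α) = C1*M*(τ^β*τ^(-α))/α := by ring
      _ = C1*M*τ^(β-α)/α := by rw [e1]
  have e2' : τ^β/τ*τ^(1-α) = τ^(β-α) := by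
    rw [div_mul_eq_mul_div, e2, mul_div_assoc, div_self hτ0.ne', mul_one]
  have hS3 : (B/τ)*(τ^(1-α)/(1-α)) = C1*M*τ^(β-α)/(1-α) := by
    rw [hBval]
    calc (C1*M*τ^β/τ)*(τ^(1-α)/(1-α)) = C1*M*(τ^β/τ*τ^(1-α))/(1-α) := by ring
      _ = C1*M*τ^(β-α)/(1-α) := by rw [e2']
  rw [hdiff, hsplitI]
  have habs : |(α / Real.Gamma (1-α)) * ((∫ s in (0:ℝ)..aa, (H s - u s)/(t-s)^(α+1))
      + ∫ s in aa..t, (H s - u s)/(t-s)^(α+1))|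
      ≤ (α / Real.Gamma (1-α)) * ((B * (τ^(-α)/α))
        + (M*(τ^(β-α)/(β-α)) + (B/τ)*(τ^(1-α)/(1-α)))) := by
    rw [abs_mul, abs_of_pos (by positivity : 0 < α / Real.Gamma (1-α))]
    apply mul_le_mul_of_nonneg_left _ (by positivity)
    exact (abs_add_le _ _).trans (add_le_add hI1 hI2)
  refine habs.trans (le_of_eq ?_)
  rw [hS1, hS3]
  field_simp
  ring
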